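/- Let f be twice differentiable on an open interval containing [γ,Γ] with d ≤ f'' ≤ D there, where γ < 1 < Γ. Then for every selfadjoint operator X on a complex Hilbert space with spectrum contained in [γ,Γ] and every ν ∈ [0,1]: (1/2)·ν·(1−ν)·d·(X−I)² ≤ (1−ν)·f(1)·I + ν·f(X) − f((1−ν)·I + ν·X) ≤ (1/2)·ν·(1−ν)·D·(X−I)² in the operator order. -/

import Mathlib

open Set

private lemma scalar_ineq {S : Set ℝ} (hS : Convex ℝ S) (hO : IsOpen S)
    {f f' f'' : ℝ → ℝ}
    (hf : ∀ t ∈ S, HasDerivAt f (f' t) t)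
    (hf' : ∀ t ∈ S, HasDerivAt f' (f'' t) t)
    {d : ℝ} (hd : ∀ t ∈ S, d ≤ f'' t)
    {t : ℝ} (ht : t ∈ S) (h1 : (1:ℝ) ∈ S)
    {ν : ℝ} (hν0 : 0 ≤ ν) (hν1 : ν ≤ 1) :
    1/2 * ν * (1 - ν) * d * (t - 1)^2
      ≤ (1 - ν) * f 1 + ν * f t - f ((1 - ν) + ν * t) := by
  set g : ℝ → ℝ := fun s => f s - d/2 * s^2 with hgdef
  have hSint : interior S = S := hO.interior_eq
  have hg' : ∀ x ∈ S, HasDerivAt g (f' x - d * x) x := by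
    intro x hx
    have h2 : HasDerivAt (fun s : ℝ => d/2 * s^2) (d/2 * (2 * x ^ 1)) x :=
      (hasDerivAt_pow 2 x).const_mul (d/2)
    have := (hf x hx).sub h2
    have e : f' x - d * x = f' x - d/2 * (2 * x ^ 1) := by ring
    rw [e]; exact this
  have hg'' : ∀ x ∈ S, HasDerivAt (fun s => f' s - d * s) (f'' x - d) x := by
    intro x hx
    have h2 : HasDerivAt (fun s : ℝ => d * s) d x := by
      simpa using (hasDerivAt_id x).const_mul d
    exact (hf' x hx).sub h2
  have hconv : ConvexOn ℝ S g := by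
    refine convexOn_of_hasDerivWithinAt2_nonneg hS
      (fun x hx => (hg' x hx).continuousAt.continuousWithinAt)
      (f' := fun s => f' s - d * s) (f'' := fun s => f'' s - d)
      (fun x hx => ?_) (fun x hx => ?_) (fun x hx => ?_)
    · rw [hSint] at hx ⊢; exact (hg' x hx).hasDerivWithinAt
    · rw [hSint] at hx ⊢; exact (hg'' x hx).hasDerivWithinAt
    · rw [hSint] at hx; have := hd x hx; linarith
  have key := hconv.2 h1 ht (by linarith : (0:ℝ) ≤ 1 - ν) hν0 (by ring)
  simp only [smul_eq_mul, mul_one, hgdef] at key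
  nlinarith [key]

theorem stmt_18 {H : Type*} [NormedAddCommGroup H] [InnerProductSpace ℂ H] [CompleteSpace H]
    (J : Set ℝ) (hJ : J.OrdConnected) (f f' f'' : ℝ → ℝ)
    (hf : ∀ t ∈ interior J, HasDerivAt f (f' t) t)
    (hf' : ∀ t ∈ interior J, HasDerivAt f' (f'' t) t)
    (d D : ℝ) (hd : ∀ t ∈ interior J, d ≤ f'' t) (hD : ∀ t ∈ interior J, f'' t ≤ D)
    (γ Γ : ℝ) (hγ1 : γ < 1) (h1Γ : 1 < Γ) (hsub : Set.Icc γ Γ ⊆ interior J)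
    (X : H →L[ℂ] H) (hX : IsSelfAdjoint X) (hspec : spectrum ℝ X ⊆ Set.Icc γ Γ)
    (ν : ℝ) (hν : ν ∈ Set.Icc (0:ℝ) 1) :
    (1/2 * ν * (1 - ν) * d) • (X - 1)^2
      ≤ ((1 - ν) * f 1) • (1 : H →L[ℂ] H) + ν • cfc f X
          - cfc f ((1 - ν) • (1 : H →L[ℂ] H) + ν • X) ∧
    ((1 - ν) * f 1) • (1 : H →L[ℂ] H) + ν • cfc f X
          - cfc f ((1 - ν) • (1 : H →L[ℂ] H) + ν • X)
      ≤ (1/2 * ν * (1 - ν) * D) • (X - 1)^2 := by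
  obtain ⟨hν0, hν1⟩ := hν
  have hS_conv : Convex ℝ (interior J) := (convex_iff_ordConnected.mpr hJ).interior
  have h1S : (1:ℝ) ∈ interior J := hsub ⟨hγ1.le, h1Γ.le⟩
  have hσ : spectrum ℝ X ⊆ interior J := hspec.trans hsub
  set ℓ : ℝ → ℝ := fun t => (1 - ν) + ν * t with hℓdef
  have hℓmaps : ∀ t ∈ Set.Icc γ Γ, ℓ t ∈ Set.Icc γ Γ := by
    rintro t ⟨h1, h2⟩
    simp only [hℓdef, Set.mem_Icc]
    constructor <;> nlinarith
  have hcontf : ContinuousOn f (interior J) :=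
    fun x hx => (hf x hx).continuousAt.continuousWithinAt
  have hcf : ContinuousOn f (spectrum ℝ X) := hcontf.mono hσ
  have hℓcont : Continuous ℓ := by fun_prop
  have hℓσ : ∀ x ∈ spectrum ℝ X, ℓ x ∈ interior J :=
    fun x hx => hsub (hℓmaps x (hspec hx))
  have hcfl : ContinuousOn (fun t => f (ℓ t)) (spectrum ℝ X) :=
    hcontf.comp hℓcont.continuousOn hℓσ
  have hA : (1 - ν) • (1 : H →L[ℂ] H) + ν • X = cfc ℓ X := by
    rw [hℓdef]
    rw [cfc_const_add (1 - ν) (fun s => ν * s) X (by fun_prop) hX,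
      cfc_const_mul_id ν X hX, Algebra.algebraMap_eq_smul_one]
  have hcomp : cfc f (cfc ℓ X) = cfc (fun t => f (ℓ t)) X := by
    rw [← cfc_comp f ℓ X hX
      (hcontf.mono (by rintro _ ⟨x, hx, rfl⟩; exact hℓσ x hx)) hℓcont.continuousOn]
    rfl
  have hXsub : X - 1 = cfc (fun t : ℝ => t - 1) X := by
    rw [cfc_sub (fun t : ℝ => t) (fun _ => (1:ℝ)) X (by fun_prop) (by fun_prop),
      cfc_id' ℝ X, cfc_const (1:ℝ) X hX, map_one]
  have hsq : (X - 1)^2 = cfc (fun t : ℝ => (t - 1)^2) X := by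
    rw [hXsub, ← cfc_pow (fun t : ℝ => t - 1) 2 X (by fun_prop) hX]
  have hE : ((1 - ν) * f 1) • (1 : H →L[ℂ] H) + ν • cfc f X
      - cfc f ((1 - ν) • (1 : H →L[ℂ] H) + ν • X)
      = cfc (fun t => ((1 - ν) * f 1 + ν * f t) - f (ℓ t)) X := by
    rw [hA, hcomp,
      cfc_sub (fun t => (1 - ν) * f 1 + ν * f t) (fun t => f (ℓ t)) X
        (continuousOn_const.add (continuousOn_const.mul hcf)) hcfl,
      cfc_const_add ((1 - ν) * f 1) (fun t => ν * f t) X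
        (continuousOn_const.mul hcf) hX,
      cfc_const_mul ν f X hcf, Algebra.algebraMap_eq_smul_one]
  constructor
  · rw [hE, hsq, ← cfc_const_mul (1/2 * ν * (1 - ν) * d) (fun t : ℝ => (t - 1)^2) X (by fun_prop)]
    refine cfc_mono (fun x hx => ?_) (by fun_prop)
      (((continuousOn_const.add (continuousOn_const.mul hcf)).sub hcfl))
    have := scalar_ineq hS_conv isOpen_interior hf hf' hd (hσ hx) h1S hν0 hν1
    simp only [hℓdef]
    nlinarith [this]
  · rw [hE, hsq, ← cfc_const_mul (1/2 * ν * (1 - ν) * D) (fun t : ℝ => (t - 1)^2) X (by fun_prop)]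
    refine cfc_mono (fun x hx => ?_)
      (((continuousOn_const.add (continuousOn_const.mul hcf)).sub hcfl)) (by fun_prop)
    have := scalar_ineq hS_conv isOpen_interior
      (f := fun s => -f s) (f' := fun s => -f' s) (f'' := fun s => -f'' s)
      (fun t ht => (hf t ht).neg) (fun t ht => (hf' t ht).neg)
      (d := -D) (fun t ht => by have := hD t ht; linarith)
      (hσ hx) h1S hν0 hν1
    simp only [hℓdef]
    nlinarith [this]
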